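/- Let 0 < q < 1. On K = ℓ²(ℤ≥0)⊗ℓ²(ℤ≥0), with z₁₁ = q^{-1} C₄S ⊗ S*C₂S*C₂ + e^{iφ} I⊗D², z₂₁ = −q^{-1} C₄S ⊗ S*C₂D + e^{iφ} I⊗C₂SD, z₂₂ = q C₄S ⊗ D² + e^{iφ} I⊗C₂SC₂S, one has z₁₁* Ω = e^{−iφ} Ω, z₂₁* Ω = 0, z₂₂* Ω = 0 for Ω = e₀⊗e₀. -/

import Mathlib

noncomputable section
open ContinuousLinearMap Complex

/-- ℓ²(ℤ≥0) ⊗ ℓ²(ℤ≥0), realized as ℓ²(ℤ≥0 × ℤ≥0) -/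
abbrev K : Type := lp (fun _ : ℕ × ℕ => ℂ) 2

/-- the orthonormal basis vector e_j ⊗ e_k -/
def E (j k : ℕ) : K := lp.single 2 (j, k) 1

/-- The (j,k) coordinate of `adjoint z Ω` is the conjugate of the (0,0) coordinate
of `z (E j k)`. -/
lemma coord (z : K →L[ℂ] K) (j k : ℕ) :
    (ContinuousLinearMap.adjoint z (E 0 0)) (j, k)
      = starRingEnd ℂ ((z (E j k)) (0, 0)) := by
  have h := ContinuousLinearMap.adjoint_inner_right (𝕜 := ℂ) z (E j k) (E 0 0)
  simp only [E, lp.inner_single_left, lp.inner_single_right, RCLike.inner_apply,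
    map_one, one_mul, mul_one] at h
  simpa [E] using h

/-- The generators z₁₁ = q⁻¹ C₄S ⊗ S*C₂S*C₂ + e^{iφ} I⊗D²,
z₂₁ = −q⁻¹ C₄S ⊗ S*C₂D + e^{iφ} I⊗C₂SD, z₂₂ = q C₄S ⊗ D² + e^{iφ} I⊗C₂SC₂S of the
representation (ℱ_φ ⊗ π₀)∘𝒟, described by their action on the basis e_j ⊗ e_k,
satisfy z₁₁* Ω = e^{−iφ} Ω, z₂₁* Ω = 0, z₂₂* Ω = 0 for Ω = e₀⊗e₀. -/
theorem stmt12 (q : ℝ) (hq : 0 < q) (hq1 : q < 1) (φ : ℝ)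
    (z11 z21 z22 : K →L[ℂ] K)
    (hz11 : ∀ j k : ℕ, z11 (E j k)
      = (((q⁻¹ * Real.sqrt (1 - q ^ (4 * (j + 1))) * Real.sqrt (1 - q ^ (2 * k))
            * Real.sqrt (1 - q ^ (2 * (k - 1)))) : ℝ) : ℂ) • E (j + 1) (k - 2)
        + (Complex.exp (φ * Complex.I) * ((q ^ (2 * k) : ℝ) : ℂ)) • E j k)
    (hz21 : ∀ j k : ℕ, z21 (E j k)
      = -(((q⁻¹ * Real.sqrt (1 - q ^ (4 * (j + 1))) * q ^ k
            * Real.sqrt (1 - q ^ (2 * k))) : ℝ) : ℂ) • E (j + 1) (k - 1)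
        + (Complex.exp (φ * Complex.I)
            * ((q ^ k * Real.sqrt (1 - q ^ (2 * (k + 1))) : ℝ) : ℂ)) • E j (k + 1))
    (hz22 : ∀ j k : ℕ, z22 (E j k)
      = (((q * Real.sqrt (1 - q ^ (4 * (j + 1))) * q ^ (2 * k)) : ℝ) : ℂ) • E (j + 1) k
        + (Complex.exp (φ * Complex.I)
            * ((Real.sqrt (1 - q ^ (2 * (k + 1)))
                * Real.sqrt (1 - q ^ (2 * (k + 2))) : ℝ) : ℂ)) • E j (k + 2)) :
    adjoint z11 (E 0 0) = Complex.exp (-(φ * Complex.I)) • E 0 0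
    ∧ adjoint z21 (E 0 0) = 0
    ∧ adjoint z22 (E 0 0) = 0 := by
  refine ⟨?_, ?_, ?_⟩
  · apply lp.ext
    funext i
    obtain ⟨j, k⟩ := i
    rw [coord, hz11]
    simp only [lp.coeFn_add, lp.coeFn_smul, Pi.add_apply, Pi.smul_apply, E, lp.single_apply,
      smul_eq_mul]
    rcases eq_or_ne (j, k) (0, 0) with h | h
    · obtain ⟨rfl, rfl⟩ := Prod.mk.injEq .. ▸ h
      simp [← Complex.exp_conj, Complex.ext_iff]
    · have e1 : ¬((0, 0) : ℕ × ℕ) = (j + 1, k - 2) := fun e => by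
        simpa using congrArg Prod.fst e
      have e2 : ¬((0, 0) : ℕ × ℕ) = (j, k) := fun e => h e.symm
      simp only [Pi.single_apply, e1, e2, h, if_false]
      simp
  · apply lp.ext
    funext i
    obtain ⟨j, k⟩ := i
    rw [coord, hz21]
    simp only [lp.coeFn_add, lp.coeFn_smul, Pi.add_apply, Pi.smul_apply, E, lp.single_apply,
      smul_eq_mul]
    have e1 : ¬((0, 0) : ℕ × ℕ) = (j + 1, k - 1) := fun e => by
      simpa using congrArg Prod.fst e
    have e2 : ¬((0, 0) : ℕ × ℕ) = (j, k + 1) := fun e => by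
      simpa using congrArg Prod.snd e
    simp only [Pi.single_apply, e1, e2, if_false]
    simp
  · apply lp.ext
    funext i
    obtain ⟨j, k⟩ := i
    rw [coord, hz22]
    simp only [lp.coeFn_add, lp.coeFn_smul, Pi.add_apply, Pi.smul_apply, E, lp.single_apply,
      smul_eq_mul]
    have e1 : ¬((0, 0) : ℕ × ℕ) = (j + 1, k) := fun e => by
      simpa using congrArg Prod.fst e
    have e2 : ¬((0, 0) : ℕ × ℕ) = (j, k + 2) := fun e => by
      simpa using congrArg Prod.snd e
    simp only [Pi.single_apply, e1, e2, if_false]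
    simp
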